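/- Let G consist of a path u = w_0, w_1, ..., w_k = v with edges e_i = w_{i-1} w_i, plus two pendant edges e', e'' at u and two pendant edges q, q' at v (so deg(u) = deg(v) = 3 when k ≥ 1, with u, v each adjacent to two leaves). Then the labeling obtained by assigning labels 1, 2, ..., k+4 in the edge order e_2, e_4, ..., e_{2⌊k/2⌋}, e', e'', q, q', e_1, e_3, ..., e_{2⌊k/2⌋+1} (the last term present only when k is odd) is strongly antimagic. -/

import Mathlib

open Finset

open scoped Classical

noncomputable section

variable {V : Type*} [Fintype V] [DecidableEq V]

/-- The finset of edges of a simple graph on a finite vertex type. -/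
def edges (G : SimpleGraph V) : Finset (Sym2 V) :=
  Finset.univ.filter (fun e => e ∈ G.edgeSet)

/-- The vertex sum `φ_f(v)`: the sum of the labels of the edges incident to `v`. -/
def phi (G : SimpleGraph V) (f : Sym2 V → ℕ) (v : V) : ℕ :=
  ∑ e ∈ (edges G).filter (fun e => v ∈ e), f e

/-- The degree of a vertex: the number of edges incident to it. -/
def deg (G : SimpleGraph V) (v : V) : ℕ :=
  ((edges G).filter (fun e => v ∈ e)).card

/-- `f` is a strongly antimagic labeling of `G`: a bijection from the edge set onto
`{1, …, m}` with pairwise distinct vertex sums, such that larger degree forces a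
larger vertex sum. -/
def IsStronglyAntimagicLabeling (G : SimpleGraph V) (f : Sym2 V → ℕ) : Prop :=
  Set.BijOn f (edges G : Set (Sym2 V)) (Set.Icc 1 (edges G).card) ∧
  (∀ u v : V, u ≠ v → phi G f u ≠ phi G f v) ∧
  (∀ u v : V, deg G v < deg G u → phi G f v < phi G f u)

/-- A graph is strongly antimagic if it admits a strongly antimagic labeling. -/
def IsStronglyAntimagic (G : SimpleGraph V) : Prop :=
  ∃ f : Sym2 V → ℕ, IsStronglyAntimagicLabeling G f

/-- The graph of STATEMENT 16: a path `w_0, …, w_k` (vertices `Sum.inl i`), two pendant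
edges `e' = w_0 (inr 0)`, `e'' = w_0 (inr 1)` at `u = w_0`, and two pendant edges
`q = w_k (inr 2)`, `q' = w_k (inr 3)` at `v = w_k`. -/
def dblSpiderB (k : ℕ) : SimpleGraph (Fin (k + 1) ⊕ Fin 4) :=
  SimpleGraph.fromEdgeSet (
    {e | ∃ i j : Fin (k + 1), (j : ℕ) = (i : ℕ) + 1 ∧ e = s(Sum.inl i, Sum.inl j)}
    ∪ {e | ∃ i : Fin (k + 1), (i : ℕ) = 0 ∧
        (e = s(Sum.inl i, Sum.inr 0) ∨ e = s(Sum.inl i, Sum.inr 1))}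
    ∪ {e | ∃ i : Fin (k + 1), (i : ℕ) = k ∧
        (e = s(Sum.inl i, Sum.inr 2) ∨ e = s(Sum.inl i, Sum.inr 3))})

/-- The smaller 0-indexed path endpoint of an edge (junk value `0` on `inr`). -/
def minIdxB {k : ℕ} : Sym2 (Fin (k + 1) ⊕ Fin 4) → ℕ :=
  Sym2.lift ⟨fun a b =>
      min (Sum.elim (fun i : Fin (k + 1) => (i : ℕ)) (fun _ => 0) a)
        (Sum.elim (fun i : Fin (k + 1) => (i : ℕ)) (fun _ => 0) b),
    fun a b => min_comm _ _⟩

/-- The labeling of STATEMENT 16: labels `1, …, k+4` in the order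
`(e_2, e_4, …, e_{2⌊k/2⌋}, e', e'', q, q', e_1, e_3, …)`. -/
def labB (k : ℕ) : Sym2 (Fin (k + 1) ⊕ Fin 4) → ℕ := fun e =>
  if (Sum.inr 0 : Fin (k + 1) ⊕ Fin 4) ∈ e then k / 2 + 1
  else if (Sum.inr 1 : Fin (k + 1) ⊕ Fin 4) ∈ e then k / 2 + 2
  else if (Sum.inr 2 : Fin (k + 1) ⊕ Fin 4) ∈ e then k / 2 + 3
  else if (Sum.inr 3 : Fin (k + 1) ⊕ Fin 4) ∈ e then k / 2 + 4
  else if (minIdxB e + 1) % 2 = 0 then (minIdxB e + 1) / 2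
  else k / 2 + 4 + (minIdxB e + 1 + 1) / 2

namespace Stmt16A

/-- the edge with label position `n`. -/
def ed (k : ℕ) (n : ℕ) : Sym2 (Fin (k + 1) ⊕ Fin 4) :=
  if h : n < k then s(Sum.inl ⟨n, by omega⟩, Sum.inl ⟨n + 1, by omega⟩)
  else if n = k then s(Sum.inl ⟨0, by omega⟩, Sum.inr 0)
  else if n = k + 1 then s(Sum.inl ⟨0, by omega⟩, Sum.inr 1)
  else if n = k + 2 then s(Sum.inl ⟨k, by omega⟩, Sum.inr 2)
  else s(Sum.inl ⟨k, by omega⟩, Sum.inr 3)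

def F (k n : ℕ) : ℕ :=
  if n < k then (if (n + 1) % 2 = 0 then (n + 1) / 2 else k / 2 + 4 + (n + 2) / 2)
  else n - k + (k / 2 + 1)

lemma labB_inl (k : ℕ) (a b : Fin (k + 1)) :
    labB k s(Sum.inl a, Sum.inl b) =
      if (min (a : ℕ) (b : ℕ) + 1) % 2 = 0 then (min (a : ℕ) (b : ℕ) + 1) / 2
      else k / 2 + 4 + (min (a : ℕ) (b : ℕ) + 1 + 1) / 2 := by
  simp [labB, minIdxB]
  congr 1

lemma labB_pend (k : ℕ) (a : Fin (k + 1)) (t : Fin 4) :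
    labB k s(Sum.inl a, Sum.inr t) = k / 2 + 1 + (t : ℕ) := by
  fin_cases t <;> simp [labB, minIdxB]

lemma labB_ed (k n : ℕ) (hn : n < k + 4) : labB k (ed k n) = F k n := by
  by_cases h1 : n < k
  · rw [ed, dif_pos h1, labB_inl, F, if_pos h1]
    simp only [Fin.val_mk]
    rw [Nat.min_eq_left (by omega : n ≤ n + 1)]
  · rw [ed, dif_neg h1, F, if_neg h1]
    have e0 : ((0 : Fin 4) : ℕ) = 0 := rfl
    have e1 : ((1 : Fin 4) : ℕ) = 1 := rfl
    have e2 : ((2 : Fin 4) : ℕ) = 2 := rfl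
    have e3 : ((3 : Fin 4) : ℕ) = 3 := rfl
    split_ifs with h2 h3 h4 <;> rw [labB_pend] <;>
      simp only [e0, e1, e2, e3] <;> omega

lemma ed_mem (k n : ℕ) (hk : 1 ≤ k) (hn : n < k + 4) :
    ed k n ∈ (dblSpiderB k).edgeSet := by
  rw [dblSpiderB, SimpleGraph.edgeSet_fromEdgeSet, Set.mem_diff]
  constructor
  · by_cases h1 : n < k
    · left; left
      exact ⟨⟨n, by omega⟩, ⟨n + 1, by omega⟩, rfl, by rw [ed, dif_pos h1]⟩
    · by_cases h2 : n = k
      · left; right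
        exact ⟨⟨0, by omega⟩, rfl, Or.inl (by subst h2; rw [ed, dif_neg h1, if_pos rfl])⟩
      · by_cases h3 : n = k + 1
        · left; right
          refine ⟨⟨0, by omega⟩, rfl, Or.inr ?_⟩
          subst h3; rw [ed, dif_neg h1, if_neg h2, if_pos rfl]
        · by_cases h4 : n = k + 2
          · right
            refine ⟨⟨k, by omega⟩, rfl, Or.inl ?_⟩
            subst h4; rw [ed, dif_neg h1, if_neg h2, if_neg h3, if_pos rfl]
          · right
            refine ⟨⟨k, by omega⟩, rfl, Or.inr ?_⟩
            have h5 : n = k + 3 := by omega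
            subst h5; rw [ed, dif_neg h1, if_neg h2, if_neg h3, if_neg h4]
  · rw [ed]
    split_ifs <;> simp [Fin.ext_iff]

lemma edges_eq (k : ℕ) (hk : 1 ≤ k) :
    edges (dblSpiderB k) = (Finset.range (k + 4)).image (ed k) := by
  ext e
  simp only [edges, Finset.mem_filter, Finset.mem_univ, true_and, Finset.mem_image,
    Finset.mem_range]
  constructor
  · intro hmem
    rw [dblSpiderB, SimpleGraph.edgeSet_fromEdgeSet, Set.mem_diff] at hmem
    obtain ⟨hS, -⟩ := hmem
    rcases hS with (⟨i, j, hji, rfl⟩ | ⟨i, hi, (rfl | rfl)⟩) | ⟨i, hi, (rfl | rfl)⟩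
    · have hik : (i : ℕ) < k := by have := j.isLt; omega
      refine ⟨(i : ℕ), by omega, ?_⟩
      rw [ed, dif_pos hik, Sym2.eq_iff]
      exact Or.inl ⟨congrArg Sum.inl (Fin.ext rfl), congrArg Sum.inl (Fin.ext hji.symm)⟩
    · refine ⟨k, by omega, ?_⟩
      rw [ed, dif_neg (by omega), if_pos rfl, Sym2.eq_iff]
      exact Or.inl ⟨congrArg Sum.inl (Fin.ext hi.symm), rfl⟩
    · refine ⟨k + 1, by omega, ?_⟩
      rw [ed, dif_neg (by omega), if_neg (by omega), if_pos rfl, Sym2.eq_iff]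
      exact Or.inl ⟨congrArg Sum.inl (Fin.ext hi.symm), rfl⟩
    · refine ⟨k + 2, by omega, ?_⟩
      rw [ed, dif_neg (by omega), if_neg (by omega), if_neg (by omega), if_pos rfl,
        Sym2.eq_iff]
      exact Or.inl ⟨congrArg Sum.inl (Fin.ext hi.symm), rfl⟩
    · refine ⟨k + 3, by omega, ?_⟩
      rw [ed, dif_neg (by omega), if_neg (by omega), if_neg (by omega), if_neg (by omega),
        Sym2.eq_iff]
      exact Or.inl ⟨congrArg Sum.inl (Fin.ext hi.symm), rfl⟩
  · rintro ⟨n, hn, rfl⟩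
    exact ed_mem k n hk hn

lemma F_inj (k : ℕ) : ∀ n < k + 4, ∀ n' < k + 4, F k n = F k n' → n = n' := by
  intro n hn n' hn' h
  unfold F at h
  split_ifs at h <;> omega

lemma F_bounds (k : ℕ) : ∀ n < k + 4, 1 ≤ F k n ∧ F k n ≤ k + 4 := by
  intro n hn
  unfold F
  split_ifs <;> omega

lemma F_surj (k : ℕ) (hk : 1 ≤ k) : ∀ t, 1 ≤ t → t ≤ k + 4 → ∃ n, n < k + 4 ∧ F k n = t := by
  intro t h1 h2
  by_cases hA : t ≤ k / 2
  · exact ⟨2 * t - 1, by omega, by unfold F; split_ifs <;> omega⟩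
  by_cases hB : t ≤ k / 2 + 4
  · exact ⟨k + (t - (k / 2 + 1)), by omega, by unfold F; split_ifs <;> omega⟩
  · exact ⟨2 * (t - (k / 2 + 4)) - 2, by omega, by unfold F; split_ifs <;> omega⟩

lemma ed_injOn (k : ℕ) : Set.InjOn (ed k) (Finset.range (k + 4)) := by
  intro a ha b hb h
  simp only [Finset.coe_range, Set.mem_Iio] at ha hb
  have h2 := congrArg (labB k) h
  rw [labB_ed k a ha, labB_ed k b hb] at h2
  exact F_inj k a ha b hb h2

lemma card_edges (k : ℕ) (hk : 1 ≤ k) : (edges (dblSpiderB k)).card = k + 4 := by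
  rw [edges_eq k hk, Finset.card_image_of_injOn (ed_injOn k), Finset.card_range]

lemma filterN_eq (k : ℕ) (hk : 1 ≤ k) (v : Fin (k + 1) ⊕ Fin 4) :
    (edges (dblSpiderB k)).filter (fun e => v ∈ e) =
      ((Finset.range (k + 4)).filter (fun n => v ∈ ed k n)).image (ed k) := by
  rw [edges_eq k hk, Finset.filter_image]

lemma deg_eq (k : ℕ) (hk : 1 ≤ k) (v : Fin (k + 1) ⊕ Fin 4) :
    deg (dblSpiderB k) v = ((Finset.range (k + 4)).filter (fun n => v ∈ ed k n)).card := by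
  rw [deg, filterN_eq k hk v]
  refine Finset.card_image_of_injOn ?_
  intro a ha b hb h
  simp only [Finset.coe_filter, Set.mem_setOf_eq, Finset.mem_range] at ha hb
  exact F_inj k a ha.1 b hb.1 (by rw [← labB_ed k a ha.1, ← labB_ed k b hb.1, h])

lemma phi_eq (k : ℕ) (hk : 1 ≤ k) (v : Fin (k + 1) ⊕ Fin 4) :
    phi (dblSpiderB k) (labB k) v =
      ∑ n ∈ (Finset.range (k + 4)).filter (fun n => v ∈ ed k n), F k n := by
  rw [phi, filterN_eq k hk v, Finset.sum_image]
  · refine Finset.sum_congr rfl fun n hn => ?_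
    simp only [Finset.mem_filter, Finset.mem_range] at hn
    exact labB_ed k n hn.1
  · intro a ha b hb h
    simp only [Finset.coe_filter, Set.mem_setOf_eq, Finset.mem_filter, Finset.mem_range] at ha hb
    exact F_inj k a ha.1 b hb.1 (by rw [← labB_ed k a ha.1, ← labB_ed k b hb.1, h])

lemma inr_mem_ed (k : ℕ) (t : Fin 4) (n : ℕ) (hn : n < k + 4) :
    Sum.inr t ∈ ed k n ↔ n = k + (t : ℕ) := by
  have ht := t.isLt
  rw [ed]
  split_ifs with h1 h2 h3 h4 <;> simp only [Sym2.mem_iff, Fin.ext_iff, reduceCtorEq, Sum.inr.injEq, false_or, or_false, Fin.isValue, Fin.val_zero, Fin.val_one, Fin.val_two] <;> norm_num <;> omega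

lemma inl_mem_ed (k : ℕ) (hk : 1 ≤ k) (i : Fin (k + 1)) (n : ℕ) (hn : n < k + 4) :
    Sum.inl i ∈ ed k n ↔
      (n < k ∧ ((i : ℕ) = n ∨ (i : ℕ) = n + 1)) ∨ ((i : ℕ) = 0 ∧ (n = k ∨ n = k + 1)) ∨
        ((i : ℕ) = k ∧ (n = k + 2 ∨ n = k + 3)) := by
  have hik := i.isLt
  rw [ed]
  split_ifs with h1 h2 h3 h4 <;> simp only [Sym2.mem_iff, Fin.ext_iff, reduceCtorEq, Sum.inl.injEq, false_or, or_false] <;> omega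

lemma filter_inr (k : ℕ) (t : Fin 4) :
    (Finset.range (k + 4)).filter (fun n => Sum.inr t ∈ ed k n) = {k + (t : ℕ)} := by
  have ht := t.isLt
  ext n
  simp only [Finset.mem_filter, Finset.mem_range, Finset.mem_singleton]
  constructor
  · rintro ⟨hn, hm⟩
    exact (inr_mem_ed k t n hn).1 hm
  · rintro rfl
    exact ⟨by omega, (inr_mem_ed k t _ (by omega)).2 rfl⟩

lemma filter_inl (k : ℕ) (hk : 1 ≤ k) (i : Fin (k + 1)) :
    (Finset.range (k + 4)).filter (fun n => Sum.inl i ∈ ed k n) =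
      if (i : ℕ) = 0 then {0, k, k + 1}
      else if (i : ℕ) = k then {k - 1, k + 2, k + 3}
      else {(i : ℕ) - 1, (i : ℕ)} := by
  have hik := i.isLt
  ext n
  simp only [Finset.mem_filter, Finset.mem_range]
  constructor
  · rintro ⟨hn, hm⟩
    rw [inl_mem_ed k hk i n hn] at hm
    split_ifs with h0 hkk <;>
      simp only [Finset.mem_insert, Finset.mem_singleton] <;> omega
  · intro hmem
    have hn : n < k + 4 := by
      split_ifs at hmem <;>
        simp only [Finset.mem_insert, Finset.mem_singleton] at hmem <;> omega
    refine ⟨hn, (inl_mem_ed k hk i n hn).2 ?_⟩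
    split_ifs at hmem with h0 hkk <;>
      simp only [Finset.mem_insert, Finset.mem_singleton] at hmem <;> omega

/-- the vertex-sum pattern on the path. -/
def P (k m : ℕ) : ℕ :=
  if m = 0 then 3 * (k / 2) + 8
  else if m = k then (if k % 2 = 0 then 3 * (k / 2) + 7 else 2 * k + 10)
  else m + k / 2 + 5

lemma phi_inr (k : ℕ) (hk : 1 ≤ k) (t : Fin 4) :
    phi (dblSpiderB k) (labB k) (Sum.inr t) = k / 2 + 1 + (t : ℕ) := by
  have ht := t.isLt
  rw [phi_eq k hk, filter_inr, Finset.sum_singleton, F, if_neg (by omega)]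
  omega

lemma phi_inl (k : ℕ) (hk : 1 ≤ k) (i : Fin (k + 1)) :
    phi (dblSpiderB k) (labB k) (Sum.inl i) = P k (i : ℕ) := by
  have hik := i.isLt
  rw [phi_eq k hk, filter_inl k hk i, P]
  have hne1 : (0:ℕ) ∉ ({k, k+1} : Finset ℕ) := by
    simp only [Finset.mem_insert, Finset.mem_singleton]; omega
  have hne2 : k ∉ ({k+1} : Finset ℕ) := by
    simp only [Finset.mem_singleton]; omega
  have hne3 : k - 1 ∉ ({k+2, k+3} : Finset ℕ) := by
    simp only [Finset.mem_insert, Finset.mem_singleton]; omega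
  have hne4 : k + 2 ∉ ({k+3} : Finset ℕ) := by
    simp only [Finset.mem_singleton]; omega
  split_ifs with h0 hkk hpar
  · rw [Finset.sum_insert hne1, Finset.sum_insert hne2, Finset.sum_singleton]
    unfold F
    split_ifs <;> first | omega | exact ‹False›.elim
  · rw [Finset.sum_insert hne3, Finset.sum_insert hne4, Finset.sum_singleton]
    unfold F
    split_ifs <;> first | omega | exact ‹False›.elim
  · rw [Finset.sum_insert hne3, Finset.sum_insert hne4, Finset.sum_singleton]
    unfold F
    split_ifs <;> first | omega | exact ‹False›.elim
  · rw [Finset.sum_insert ?_, Finset.sum_singleton]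
    · unfold F
      split_ifs <;> omega
    · simp only [Finset.mem_singleton]; omega

lemma deg_inr (k : ℕ) (hk : 1 ≤ k) (t : Fin 4) :
    deg (dblSpiderB k) (Sum.inr t) = 1 := by
  rw [deg_eq k hk, filter_inr, Finset.card_singleton]

lemma deg_inl (k : ℕ) (hk : 1 ≤ k) (i : Fin (k + 1)) :
    deg (dblSpiderB k) (Sum.inl i) = if (i : ℕ) = 0 ∨ (i : ℕ) = k then 3 else 2 := by
  have hik := i.isLt
  rw [deg_eq k hk, filter_inl k hk i]
  have m1 : (0:ℕ) ∉ ({k, k+1} : Finset ℕ) := by simp only [Finset.mem_insert, Finset.mem_singleton]; omega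
  have m2 : k ∉ ({k+1} : Finset ℕ) := by simp only [Finset.mem_singleton]; omega
  have m3 : k - 1 ∉ ({k+2, k+3} : Finset ℕ) := by simp only [Finset.mem_insert, Finset.mem_singleton]; omega
  have m4 : k + 2 ∉ ({k+3} : Finset ℕ) := by simp only [Finset.mem_singleton]; omega
  have c1 : ({0, k, k+1} : Finset ℕ).card = 3 := by
    rw [Finset.card_insert_of_notMem m1, Finset.card_insert_of_notMem m2, Finset.card_singleton]
  have c2 : ({k - 1, k+2, k+3} : Finset ℕ).card = 3 := by
    rw [Finset.card_insert_of_notMem m3, Finset.card_insert_of_notMem m4, Finset.card_singleton]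
  split_ifs with h0 h3 h3 h3 <;> first
    | omega
    | (rw [c1])
    | (rw [c2])
    | (rw [Finset.card_insert_of_notMem (show (i:ℕ) - 1 ∉ ({(i:ℕ)} : Finset ℕ) by simp only [Finset.mem_singleton]; omega), Finset.card_singleton])

end Stmt16A

open Stmt16A

/-- the explicit labeling of the double spider with two pendant edges at
each end of the path is strongly antimagic. -/
theorem stmt_16 (k : ℕ) (hk : 1 ≤ k) :
    IsStronglyAntimagicLabeling (dblSpiderB k) (labB k) := by
  refine ⟨?_, ?_, ?_⟩
  · rw [card_edges k hk]
    refine ⟨?_, ?_, ?_⟩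
    · intro e he
      rw [Finset.mem_coe, edges_eq k hk, Finset.mem_image] at he
      obtain ⟨n, hn, rfl⟩ := he
      rw [Finset.mem_range] at hn
      rw [labB_ed k n hn, Set.mem_Icc]
      exact F_bounds k n hn
    · intro a ha b hb h
      rw [Finset.mem_coe, edges_eq k hk, Finset.mem_image] at ha hb
      obtain ⟨n, hn, rfl⟩ := ha
      obtain ⟨n', hn', rfl⟩ := hb
      rw [Finset.mem_range] at hn hn'
      rw [labB_ed k n hn, labB_ed k n' hn'] at h
      rw [F_inj k n hn n' hn' h]
    · intro t ht
      rw [Set.mem_Icc] at ht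
      obtain ⟨n, hn, hF⟩ := F_surj k hk t ht.1 ht.2
      refine ⟨ed k n, ?_, ?_⟩
      · rw [Finset.mem_coe, edges_eq k hk]
        exact Finset.mem_image_of_mem _ (Finset.mem_range.2 hn)
      · rw [labB_ed k n hn, hF]
  · rintro (i | t) (i' | t') hne
    · rw [phi_inl k hk i, phi_inl k hk i']
      have hv : (i : ℕ) ≠ (i' : ℕ) := fun h => hne (congrArg Sum.inl (Fin.ext h))
      have h1 := i.isLt
      have h2 := i'.isLt
      unfold P
      split_ifs <;> omega
    · rw [phi_inl k hk i, phi_inr k hk t']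
      have h1 := i.isLt
      have ht := t'.isLt
      unfold P
      split_ifs <;> omega
    · rw [phi_inr k hk t, phi_inl k hk i']
      have h1 := i'.isLt
      have ht := t.isLt
      unfold P
      split_ifs <;> omega
    · rw [phi_inr k hk t, phi_inr k hk t']
      have hv : (t : ℕ) ≠ (t' : ℕ) := fun h => hne (congrArg Sum.inr (Fin.ext h))
      omega
  · rintro (i | t) (i' | t') hdeg
    · rw [deg_inl k hk i, deg_inl k hk i'] at hdeg
      rw [phi_inl k hk i, phi_inl k hk i']
      have h1 := i.isLt
      have h2 := i'.isLt
      unfold P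
      split_ifs at hdeg ⊢ <;> omega
    · rw [deg_inl k hk i, deg_inr k hk t'] at hdeg
      rw [phi_inl k hk i, phi_inr k hk t']
      have h1 := i.isLt
      have ht := t'.isLt
      unfold P
      split_ifs <;> omega
    · rw [deg_inr k hk t, deg_inl k hk i'] at hdeg
      split_ifs at hdeg <;> omega
    · rw [deg_inr k hk t, deg_inr k hk t'] at hdeg
      omega
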